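/- Let A be a set of integers greater than 1. Suppose that for every real x ≥ 2 one has Σ_{n∈A, n≤x} 1/n ≤ Σ_{p∈𝒫(A), p≤x} 1/p. Then Σ_{n∈A} 1/(n log n) ≤ Σ_{p∈𝒫(A)} 1/(p log p). -/

import Mathlib

open scoped BigOperators ENNReal

/-- `primesOf A` is the set `𝒫(A)` of primes dividing some member of `A`. -/
def primesOf (A : Set ℕ) : Set ℕ := {p : ℕ | p.Prime ∧ ∃ n ∈ A, p ∣ n}

/-- A set of integers greater than 1 is *primitive* if no element divides another. -/
def Primitive (A : Set ℕ) : Prop :=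
  (∀ n ∈ A, 1 < n) ∧ ∀ a ∈ A, ∀ b ∈ A, a ≠ b → ¬a ∣ b

/-- A set `A` of integers greater than 1 with `|A| ≥ k + 1` is *k-primitive* if no element
divides the product of `k` distinct other elements of `A`. -/
def KPrimitive (k : ℕ) (A : Set ℕ) : Prop :=
  (∀ n ∈ A, 1 < n) ∧ (k : ℕ∞) + 1 ≤ A.encard ∧
    ∀ a ∈ A, ∀ B : Finset ℕ, ↑B ⊆ A \ {a} → B.card = k → ¬a ∣ ∏ b ∈ B, b

open Filter

noncomputable def dd (m : ℕ) : ℝ≥0∞ :=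
  ENNReal.ofReal (1 / Real.log m - 1 / Real.log (m + 1))

lemma telescope (n : ℕ) (hn : 2 ≤ n) :
    ∑' m : ℕ, (if n ≤ m then dd m else 0) = ENNReal.ofReal (1 / Real.log n) := by
  classical
  set f : ℕ → ℝ := fun k => 1 / Real.log ((n:ℝ) + k) with hf
  have h2 : ∀ k : ℕ, (2:ℝ) ≤ (n:ℝ) + k := by
    intro k
    have h' : (2:ℝ) ≤ (n:ℝ) := by exact_mod_cast hn
    have h'' : (0:ℝ) ≤ (k:ℝ) := Nat.cast_nonneg k
    linarith
  have hpos : ∀ k : ℕ, (0:ℝ) < Real.log ((n:ℝ) + k) := fun k =>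
    Real.log_pos (by linarith [h2 k])
  have hnonneg : ∀ k : ℕ, (0:ℝ) ≤ f k - f (k + 1) := by
    intro k
    have hle : Real.log ((n:ℝ) + k) ≤ Real.log ((n:ℝ) + (k+1:ℕ)) := by
      apply Real.log_le_log (by linarith [h2 k])
      push_cast; linarith
    have := one_div_le_one_div_of_le (hpos k) hle
    simp only [hf]
    linarith
  have htend : Tendsto f atTop (nhds 0) := by
    have h1 : Tendsto (fun k : ℕ => (n:ℝ) + k) atTop atTop :=
      tendsto_atTop_add_const_left _ _ tendsto_natCast_atTop_atTop
    have h2' : Tendsto (fun k : ℕ => Real.log ((n:ℝ) + k)) atTop atTop :=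
      Real.tendsto_log_atTop.comp h1
    have := h2'.inv_tendsto_atTop
    simp only [hf, one_div]; exact this
  have hsum : HasSum (fun k => f k - f (k + 1)) (f 0) := by
    rw [hasSum_iff_tendsto_nat_of_nonneg hnonneg]
    have hps : ∀ N : ℕ, ∑ i ∈ Finset.range N, (f i - f (i + 1)) = f 0 - f N :=
      fun N => Finset.sum_range_sub' f N
    simp only [hps]
    simpa using tendsto_const_nhds.sub htend
  have heq : ∀ k : ℕ, dd (n + k) = ENNReal.ofReal (f k - f (k + 1)) := by
    intro k
    simp only [dd, hf]
    congr 1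
    push_cast
    ring_nf
  have hkey : ∑' k : ℕ, dd (n + k) = ENNReal.ofReal (1 / Real.log n) :=
    calc ∑' k : ℕ, dd (n + k) = ∑' k : ℕ, ENNReal.ofReal (f k - f (k + 1)) :=
          tsum_congr heq
      _ = ENNReal.ofReal (∑' k : ℕ, (f k - f (k + 1))) :=
          (ENNReal.ofReal_tsum_of_nonneg hnonneg hsum.summable).symm
      _ = ENNReal.ofReal (f 0) := by rw [hsum.tsum_eq]
      _ = ENNReal.ofReal (1 / Real.log n) := by simp [hf]
  rw [← hkey]
  have hind : ∀ m : ℕ, (if n ≤ m then dd m else 0) = Set.indicator (Set.Ici n) dd m := by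
    intro m; simp [Set.indicator_apply, Set.mem_Ici]
  rw [tsum_congr hind, ← tsum_subtype]
  let e : ℕ ≃ (Set.Ici n : Set ℕ) :=
    { toFun := fun k => ⟨n + k, Nat.le_add_right n k⟩
      invFun := fun m => m.1 - n
      left_inv := fun k => by simp
      right_inv := fun m => by
        ext
        exact Nat.add_sub_cancel' m.2 }
  exact (Equiv.tsum_eq e (fun x : (Set.Ici n : Set ℕ) => dd x)).symm

noncomputable def SS (B : Set ℕ) (m : ℕ) : ℝ≥0∞ :=
  ∑' n : {n : ℕ | n ∈ B ∧ n ≤ m}, ENNReal.ofReal (1 / ((n : ℕ) : ℝ))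

lemma key (B : Set ℕ) (hB : ∀ n ∈ B, 2 ≤ n) :
    ∑' n : B, ENNReal.ofReal (1 / ((n : ℕ) * Real.log (n : ℕ))) =
      ∑' m : ℕ, dd m * SS B m := by
  classical
  have hmain :
      ∑' n : ℕ, ∑' m : ℕ,
        (Set.indicator B (fun n => ENNReal.ofReal (1 / ((n:ℕ):ℝ))) n *
          (if n ≤ m then dd m else 0)) =
      ∑' n : B, ENNReal.ofReal (1 / ((n : ℕ) * Real.log (n : ℕ))) := by
    rw [tsum_subtype B (fun n : ℕ => ENNReal.ofReal (1 / ((n:ℝ) * Real.log (n:ℝ))))]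
    apply tsum_congr
    intro n
    by_cases hn : n ∈ B
    · rw [ENNReal.tsum_mul_left, telescope n (hB n hn)]
      simp only [Set.indicator_of_mem hn]
      rw [← ENNReal.ofReal_mul (by positivity)]
      congr 1
      rw [one_div_mul_one_div]
    · simp [Set.indicator_of_notMem hn]
  rw [← hmain, ENNReal.tsum_comm]
  apply tsum_congr
  intro m
  have : ∀ n : ℕ,
      (Set.indicator B (fun n => ENNReal.ofReal (1 / ((n:ℕ):ℝ))) n *
        (if n ≤ m then dd m else 0)) =
      dd m * Set.indicator {n : ℕ | n ∈ B ∧ n ≤ m}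
        (fun n => ENNReal.ofReal (1 / ((n:ℕ):ℝ))) n := by
    intro n
    by_cases hn : n ∈ B <;> by_cases hm : n ≤ m <;>
      simp [Set.indicator_apply, hn, hm, Set.mem_setOf_eq, mul_comm]
  rw [tsum_congr this, ENNReal.tsum_mul_left, SS,
    tsum_subtype {n : ℕ | n ∈ B ∧ n ≤ m} (fun n : ℕ => ENNReal.ofReal (1 / ((n:ℝ))))]

/-- If `∑_{n ∈ A, n ≤ x} 1/n ≤ ∑_{p ∈ 𝒫(A), p ≤ x} 1/p` for every `x ≥ 2`, then
`∑_{n ∈ A} 1/(n log n) ≤ ∑_{p ∈ 𝒫(A)} 1/(p log p)`. -/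
theorem f_le_of_partial_sums (A : Set ℕ) (hA : ∀ n ∈ A, 1 < n)
    (h : ∀ x : ℝ, 2 ≤ x →
      ∑' n : {n : ℕ | n ∈ A ∧ (n : ℝ) ≤ x}, (1 : ℝ) / ((n : ℕ) : ℝ) ≤
        ∑' p : {p : ℕ | p ∈ primesOf A ∧ (p : ℝ) ≤ x}, (1 : ℝ) / ((p : ℕ) : ℝ)) :
    ∑' n : A, ENNReal.ofReal (1 / ((n : ℕ) * Real.log (n : ℕ))) ≤
      ∑' p : primesOf A, ENNReal.ofReal (1 / ((p : ℕ) * Real.log (p : ℕ))) := by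
  classical
  have hA2 : ∀ n ∈ A, 2 ≤ n := fun n hn => hA n hn
  have hP2 : ∀ p ∈ primesOf A, 2 ≤ p := fun p hp => hp.1.two_le
  rw [key A hA2, key (primesOf A) hP2]
  apply ENNReal.tsum_le_tsum
  intro m
  apply mul_le_mul_right
  -- SS A m ≤ SS (primesOf A) m
  by_cases hm : 2 ≤ m
  · -- translate sets
    have hsetA : {n : ℕ | n ∈ A ∧ n ≤ m} = {n : ℕ | n ∈ A ∧ (n:ℝ) ≤ (m:ℝ)} := by
      ext n; simp [Nat.cast_le]
    have hsetP : {p : ℕ | p ∈ primesOf A ∧ p ≤ m} =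
        {p : ℕ | p ∈ primesOf A ∧ (p:ℝ) ≤ (m:ℝ)} := by
      ext p; simp [Nat.cast_le]
    have hfinA : {n : ℕ | n ∈ A ∧ n ≤ m}.Finite :=
      (Set.finite_Iic m).subset (fun n hn => hn.2)
    have hfinP : {p : ℕ | p ∈ primesOf A ∧ p ≤ m}.Finite :=
      (Set.finite_Iic m).subset (fun p hp => hp.2)
    have hreal := h (m : ℝ) (by exact_mod_cast hm)
    rw [← hsetA, ← hsetP] at hreal
    haveI := hfinA.fintype
    haveI := hfinP.fintype
    rw [SS, SS, tsum_fintype, tsum_fintype]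
    rw [tsum_fintype, tsum_fintype] at hreal
    rw [← ENNReal.ofReal_sum_of_nonneg (fun i _ => by positivity),
        ← ENNReal.ofReal_sum_of_nonneg (fun i _ => by positivity)]
    exact ENNReal.ofReal_le_ofReal hreal
  · have hempty : {n : ℕ | n ∈ A ∧ n ≤ m} = ∅ := by
      ext n
      simp only [Set.mem_setOf_eq, Set.mem_empty_iff_false, iff_false, not_and]
      intro hn hle
      exact hm (le_trans (hA2 n hn) hle)
    rw [SS, hempty]
    simp
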